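/- Let m ≥ 1 be an integer, q₀ = 2^m, q = 2q₀², and let F be a finite field with q³ elements. Then the number of pairs (α, β) ∈ F × F satisfying β^q + β = α^{q₀+q} + α^{q₀+1} equals q². -/

import Mathlib

theorem suzuki_affine_point_count_7
    (m q₀ q : ℕ) (hm : 1 ≤ m) (hq₀ : q₀ = 2 ^ m) (hq : q = 2 * q₀ ^ 2)
    (F : Type*) [Field F] [Fintype F] (hF : Fintype.card F = q ^ 3) :
    Set.ncard {p : F × F | p.2 ^ q + p.2 = p.1 ^ (q₀ + q) + p.1 ^ (q₀ + 1)} = q ^ 2 := by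
  classical
  have hq2 : q = 2 ^ (2 * m + 1) := by rw [hq, hq₀]; ring
  have hq1 : 1 < q := by
    rw [hq2]; exact Nat.one_lt_two_pow (by omega)
  -- characteristic 2
  have hcard2 : Fintype.card F = 2 ^ (6 * m + 3) := by rw [hF, hq2]; ring
  have h2 : (2 : F) = 0 := by
    have hc : ((Fintype.card F : ℕ) : F) = 0 := FiniteField.cast_card_eq_zero F
    rw [hcard2] at hc
    push_cast at hc
    exact pow_eq_zero_iff (by omega) |>.mp hc
  have hchar : CharP F 2 := by
    have hd : ringChar F ∣ 2 := ringChar.dvd (by exact_mod_cast h2)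
    have : ringChar F = 2 :=
      ((Nat.dvd_prime Nat.prime_two).mp hd).resolve_left CharP.ringChar_ne_one
    exact this ▸ ringChar.charP F
  haveI := hchar
  have hfrob : ∀ (k : ℕ) (x y : F), (x + y) ^ 2 ^ k = x ^ 2 ^ k + y ^ 2 ^ k := fun k x y =>
    add_pow_char_pow x y 2 k
  have hfq : ∀ x y : F, (x + y) ^ q = x ^ q + y ^ q := by
    intro x y; rw [hq2]; exact hfrob _ _ _
  have hfq₀ : ∀ x y : F, (x + y) ^ q₀ = x ^ q₀ + y ^ q₀ := by
    intro x y; rw [hq₀]; exact hfrob _ _ _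
  have hf2q₀ : ∀ x y : F, (x + y) ^ (2 * q₀) = x ^ (2 * q₀) + y ^ (2 * q₀) := by
    intro x y; rw [show 2 * q₀ = 2 ^ (m + 1) by rw [hq₀]; ring]; exact hfrob _ _ _
  have hfqq₀ : ∀ x y : F, (x + y) ^ (q * q₀) = x ^ (q * q₀) + y ^ (q * q₀) := by
    intro x y; rw [show q * q₀ = 2 ^ (3 * m + 1) by rw [hq2, hq₀]; ring]; exact hfrob _ _ _
  have hq3 : ∀ x : F, x ^ q ^ 3 = x := by
    intro x; rw [← hF]; exact FiniteField.pow_card x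
  have Tzero : ∀ x : F, (x ^ q + x) + (x ^ q + x) ^ q + ((x ^ q + x) ^ q) ^ q = 0 := by
    intro x
    rw [hfq, hfq]
    rw [show ((x ^ q) ^ q) ^ q = x by
      rw [← pow_mul, ← pow_mul, show q * (q * q) = q ^ 3 by ring, hq3]]
    linear_combination (x + x ^ q + (x ^ q) ^ q) * h2
  obtain ⟨Q, hQ⟩ : ∃ Q, q = Q + 1 := ⟨q - 1, by omega⟩
  -- key lemma
  have key : ∀ α β : F, β ^ q + β = α ^ (q₀ + q) + α ^ (q₀ + 1) → α ^ q = α := by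
    intro α β hmain
    by_contra hne
    set u : F := α ^ q + α with hu_def
    have hu : u ≠ 0 := by
      intro h
      apply hne
      rw [hu_def] at h
      linear_combination h - α * h2
    -- trace of RHS is zero
    have hTf : (α ^ (q₀ + q) + α ^ (q₀ + 1)) + (α ^ (q₀ + q) + α ^ (q₀ + 1)) ^ q
        + ((α ^ (q₀ + q) + α ^ (q₀ + 1)) ^ q) ^ q = 0 := by
      rw [← hmain]; exact Tzero β
    rw [hfq (α ^ (q₀ + q)) (α ^ (q₀ + 1)),
      hfq ((α ^ (q₀ + q)) ^ q) ((α ^ (q₀ + 1)) ^ q)] at hTf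
    simp only [← pow_mul] at hTf
    have hred : α ^ ((q₀ + q) * q * q) = α ^ (q₀ * (q * q)) * α := by
      rw [show (q₀ + q) * q * q = q₀ * (q * q) + q ^ 3 by ring, pow_add, hq3]
    rw [hred] at hTf
    have h0 : u ^ (q₀ + 1) + u ^ (q * q₀ + 1) + u ^ (q * (q₀ + 1)) = 0 := by
      rw [hu_def, show q * (q₀ + 1) = q * q₀ + q by ring, pow_add, pow_add, pow_add, pow_one,
        hfq₀, hfqq₀, hfq]
      simp only [← pow_mul]
      linear_combination hTf + (α ^ (q * q₀ + q) + α ^ (q * q₀ + 1) + α ^ (q * q * q₀ + q)) * h2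
    obtain ⟨z, hz_def⟩ : ∃ z : F, z = u ^ Q := ⟨_, rfl⟩
    have hz : z ≠ 0 := hz_def ▸ pow_ne_zero _ hu
    have hi : z ^ (q₀ + 1) + z ^ q₀ + 1 = 0 := by
      have hmul : (z ^ (q₀ + 1) + z ^ q₀ + 1) * u ^ (q₀ + 1)
          = u ^ (q₀ + 1) + u ^ (q * q₀ + 1) + u ^ (q * (q₀ + 1)) := by
        rw [hz_def, hQ]; ring
      exact (mul_eq_zero.mp (hmul.trans h0)).resolve_right (pow_ne_zero _ hu)
    have hTru : u + u ^ q + u ^ (q * q) = 0 := by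
      have h' := Tzero α
      rw [← hu_def, ← pow_mul] at h'
      exact h'
    have hii : z ^ (q + 1) + z + 1 = 0 := by
      have hmul : (z ^ (q + 1) + z + 1) * u = u ^ (q * q) + u ^ q + u := by
        rw [hz_def, hQ]; ring
      exact (mul_eq_zero.mp (hmul.trans (by linear_combination hTru))).resolve_right hu
    have hiii : z ^ (q + q₀ + 1) = 1 := by
      linear_combination (z ^ q₀) * hii + hi - (z ^ (q₀ + 1) + z ^ q₀ + 1) * h2
    have hiv : z ^ (q + 2 * q₀) + z ^ q = 1 := by
      have h1' : (z ^ (q₀ + 1) + z ^ q₀) ^ (2 * q₀) = 1 := by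
        rw [show z ^ (q₀ + 1) + z ^ q₀ = 1 by linear_combination hi - h2, one_pow]
      rw [hf2q₀] at h1'
      simp only [← pow_mul] at h1'
      rw [show (q₀ + 1) * (2 * q₀) = q + 2 * q₀ by rw [hq]; ring,
        show q₀ * (2 * q₀) = q by rw [hq]; ring] at h1'
      exact h1'
    have hv2 : z ^ q₀ = 1 := by
      have hzz : z ^ q₀ * (z ^ q₀ - 1) = 0 := by
        linear_combination (z ^ (q₀ + 1)) * hiv - (z ^ (2 * q₀) + 1) * hiii + hi
          - (z ^ q₀ + 1) * h2
      rcases mul_eq_zero.mp hzz with h | h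
      · exact absurd h (pow_ne_zero _ hz)
      · exact sub_eq_zero.mp h
    have hz0 : z = 0 := by linear_combination hi - (z + 1) * hv2 - h2
    exact hz hz0
  -- root-counting for X^q - X
  have hbig_ne : (Polynomial.X ^ q ^ 3 - Polynomial.X : Polynomial F) ≠ 0 :=
    FiniteField.X_pow_card_sub_X_ne_zero F (Nat.one_lt_pow (by omega) hq1)
  have hP_ne : (Polynomial.X ^ q - Polynomial.X : Polynomial F) ≠ 0 :=
    FiniteField.X_pow_card_sub_X_ne_zero F hq1
  have hbig_roots : (Polynomial.X ^ q ^ 3 - Polynomial.X : Polynomial F).roots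
      = Finset.univ.val := by
    rw [← hF]; exact FiniteField.roots_X_pow_card_sub_X F
  have hdvd : (Polynomial.X ^ q - Polynomial.X : Polynomial F)
      ∣ (Polynomial.X ^ q ^ 3 - Polynomial.X) := by
    have key1 : (Polynomial.X ^ q - Polynomial.X : Polynomial F)
        = Polynomial.X * (Polynomial.X ^ Q - 1) := by
      rw [mul_sub, mul_one, hQ, pow_succ, mul_comm]
    have key2 : (Polynomial.X ^ q ^ 3 - Polynomial.X : Polynomial F)
        = Polynomial.X * ((Polynomial.X ^ Q) ^ (q ^ 2 + q + 1) - 1) := by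
      rw [← pow_mul, show q ^ 3 = Q * (q ^ 2 + q + 1) + 1 by rw [hQ]; ring,
        pow_succ, mul_comm (Polynomial.X ^ (Q * (q ^ 2 + q + 1))) Polynomial.X,
        mul_sub, mul_one]
    rw [key1, key2]
    have hd := sub_dvd_pow_sub_pow ((Polynomial.X : Polynomial F) ^ Q) 1 (q ^ 2 + q + 1)
    rw [one_pow] at hd
    exact mul_dvd_mul_left _ hd
  have hle : (Polynomial.X ^ q - Polynomial.X : Polynomial F).roots
      ≤ (Polynomial.X ^ q ^ 3 - Polynomial.X : Polynomial F).roots :=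
    Polynomial.roots.le_of_dvd hbig_ne hdvd
  have hnodup : (Polynomial.X ^ q - Polynomial.X : Polynomial F).roots.Nodup := by
    rw [hbig_roots] at hle
    exact Multiset.nodup_of_le hle Finset.univ.nodup
  have hsplit_big : Polynomial.Splits
      (Polynomial.X ^ q ^ 3 - Polynomial.X : Polynomial F) := by
    rw [Polynomial.splits_iff_card_roots, hbig_roots,
      FiniteField.X_pow_card_sub_X_natDegree_eq F (Nat.one_lt_pow (by omega) hq1)]
    simpa using hF
  have hsplit : Polynomial.Splits (Polynomial.X ^ q - Polynomial.X : Polynomial F) :=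
    Polynomial.Splits.of_dvd hsplit_big hbig_ne hdvd
  have hcardroots :
      Multiset.card (Polynomial.X ^ q - Polynomial.X : Polynomial F).roots = q := by
    rw [Polynomial.splits_iff_card_roots.mp hsplit,
      FiniteField.X_pow_card_sub_X_natDegree_eq F hq1]
  set Rf : Finset F := (Polynomial.X ^ q - Polynomial.X : Polynomial F).roots.toFinset
    with hRf_def
  have hRfcard : Rf.card = q := by
    rw [hRf_def, Multiset.toFinset_card_of_nodup hnodup, hcardroots]
  have hmem : ∀ x : F, x ∈ Rf ↔ x ^ q = x := by
    intro x
    rw [hRf_def, Multiset.mem_toFinset, Polynomial.mem_roots hP_ne]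
    simp [Polynomial.IsRoot, sub_eq_zero]
  have hset : {p : F × F | p.2 ^ q + p.2 = p.1 ^ (q₀ + q) + p.1 ^ (q₀ + 1)}
      = ↑(Rf ×ˢ Rf) := by
    ext ⟨a, b⟩
    simp only [Set.mem_setOf_eq, Finset.coe_product, Set.mem_prod, Finset.mem_coe, hmem]
    constructor
    · intro h
      have ha : a ^ q = a := key a b h
      refine ⟨ha, ?_⟩
      have hra : a ^ (q₀ + q) + a ^ (q₀ + 1) = 0 := by
        rw [pow_add, pow_add, pow_one, ha]
        linear_combination (a ^ q₀ * a) * h2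
      rw [hra] at h
      linear_combination h - b * h2
    · rintro ⟨ha, hb⟩
      rw [pow_add, pow_add, pow_one, ha]
      linear_combination hb + (b - a ^ q₀ * a) * h2
  rw [hset, Set.ncard_coe_finset, Finset.card_product, hRfcard, sq]
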